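/- Let Q : Y → ℤ be a quadratic form and C₁, C₂ two bisectors of Q. Then there exists a function H : Y/2Y → ℤ/2ℤ such that C₂(y₁,y₂) - C₁(y₁,y₂) = H(y₁+y₂) - H(y₁) - H(y₂) for all y₁, y₂ ∈ Y; in other words, any two bisectors of Q are isomorphic in the groupoid of bisectors. -/

import Mathlib

/-- Any two bisectors `C₁, C₂` of a quadratic form `Q` are isomorphic in the groupoid of
bisectors: there is a function `H : Y/2Y → ℤ/2ℤ` (here: a function on `Y` invariant under
translation by `2Y`) with `C₂ - C₁ = ∂H`. -/
lemma bisector_aux {Y : Type*} [AddCommGroup Y] {ι : Type*} [Fintype ι] [LinearOrder ι]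
    (b : Module.Basis ι ℤ Y) (D : Y → Y → ZMod 2)
    (h1 : ∀ y₁ y₂ y₃ : Y, D (y₁ + y₂) y₃ = D y₁ y₃ + D y₂ y₃)
    (h2 : ∀ y₁ y₂ y₃ : Y, D y₁ (y₂ + y₃) = D y₁ y₂ + D y₁ y₃)
    (h0 : ∀ y : Y, D y y = 0) :
    ∃ H : Y → ZMod 2,
      (∀ y z : Y, H (y + 2 • z) = H y) ∧
      (∀ y₁ y₂ : Y, D y₁ y₂ = H (y₁ + y₂) - H y₁ - H y₂) := by
  classical
  -- coefficients mod 2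
  set c : Y → ι → ZMod 2 := fun y i => ((b.repr y i : ℤ) : ZMod 2) with hc
  have c_add : ∀ y z i, c (y + z) i = c y i + c z i := by
    intro y z i
    simp only [hc, map_add, Finsupp.add_apply]
    push_cast
    ring
  have c_two : ∀ y z i, c (y + 2 • z) i = c y i := by
    intro y z i
    simp only [hc, map_add, map_nsmul, Finsupp.add_apply, Finsupp.smul_apply, smul_eq_mul]
    push_cast
    ring_nf
    simp [show ((2 : ℤ) : ZMod 2) = 0 from rfl]
    exact Or.inr (by decide)
  -- additive hom in first variable
  have D0l : ∀ z, D 0 z = 0 := by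
    intro z
    have := h1 0 0 z
    simpa using this.symm
  have D0r : ∀ z, D z 0 = 0 := by
    intro z
    have := h2 z 0 0
    simpa using this.symm
  have Dsymm : ∀ y z, D y z = D z y := by
    intro y z
    have h := h0 (y + z)
    rw [h1, h2, h2, h0, h0] at h
    have : D y z + D z y = 0 := by linear_combination h
    have := neg_eq_of_add_eq_zero_left this
    rw [← this, CharTwo.neg_eq]
  have Dsum1 : ∀ (f : ι → Y) (z : Y), D (∑ i, f i) z = ∑ i, D (f i) z := by
    intro f z
    exact map_sum (AddMonoidHom.mk' (fun y => D y z) (fun a b' => h1 a b' z)) f Finset.univ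
  have Dsum2 : ∀ (y : Y) (f : ι → Y), D y (∑ i, f i) = ∑ i, D y (f i) := by
    intro y f
    exact map_sum (AddMonoidHom.mk' (fun w => D y w) (fun a b' => h2 y a b')) f Finset.univ
  have Dzsmul1 : ∀ (n : ℤ) (y z : Y), D (n • y) z = (n : ZMod 2) * D y z := by
    intro n y z
    have := map_zsmul (AddMonoidHom.mk' (fun y => D y z) (fun a b' => h1 a b' z)) n y
    simpa [zsmul_eq_mul] using this
  have Dzsmul2 : ∀ (n : ℤ) (y z : Y), D y (n • z) = (n : ZMod 2) * D y z := by
    intro n y z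
    have := map_zsmul (AddMonoidHom.mk' (fun w => D y w) (fun a b' => h2 y a b')) n z
    simpa [zsmul_eq_mul] using this
  -- expansion
  have expand : ∀ y z : Y, D y z = ∑ i, ∑ j, c y i * c z j * D (b i) (b j) := by
    intro y z
    conv_lhs => rw [← b.sum_repr y, ← b.sum_repr z]
    rw [Dsum1]
    refine Finset.sum_congr rfl fun i _ => ?_
    rw [Dsum2]
    refine Finset.sum_congr rfl fun j _ => ?_
    rw [Dzsmul1, Dzsmul2, hc]
    ring
  set S : Finset (ι × ι) := Finset.univ.filter (fun p => p.1 < p.2) with hS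
  refine ⟨fun y => ∑ p ∈ S, c y p.1 * c y p.2 * D (b p.1) (b p.2), ?_, ?_⟩
  · intro y z
    refine Finset.sum_congr rfl fun p _ => ?_
    rw [c_two, c_two]
  · intro y z
    rw [← Finset.sum_sub_distrib, ← Finset.sum_sub_distrib]
    have rhs_eq : ∀ p ∈ S,
        c (y + z) p.1 * c (y + z) p.2 * D (b p.1) (b p.2)
          - c y p.1 * c y p.2 * D (b p.1) (b p.2)
          - c z p.1 * c z p.2 * D (b p.1) (b p.2)
        = (c y p.1 * c z p.2 + c z p.1 * c y p.2) * D (b p.1) (b p.2) := by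
      intro p _
      rw [c_add, c_add]
      ring
    rw [Finset.sum_congr rfl rhs_eq]
    -- now handle LHS
    rw [expand, ← Finset.sum_product']
    have huniv : (Finset.univ ×ˢ Finset.univ : Finset (ι × ι)) = Finset.univ := by
      simp
    rw [huniv]
    set f : ι × ι → ZMod 2 := fun p => c y p.1 * c z p.2 * D (b p.1) (b p.2) with hf
    rw [← Finset.sum_filter_add_sum_filter_not Finset.univ (fun p : ι × ι => p.1 < p.2) f]
    have hsplit : (Finset.univ.filter (fun p : ι × ι => ¬ p.1 < p.2)) =
        (Finset.univ.filter (fun p : ι × ι => p.2 < p.1)) ∪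
        (Finset.univ.filter (fun p : ι × ι => p.1 = p.2)) := by
      ext p
      simp only [Finset.mem_filter, Finset.mem_union, Finset.mem_univ, true_and]
      constructor
      · intro h
        rcases lt_or_eq_of_le (le_of_not_gt h) with h' | h'
        · exact Or.inl h'
        · exact Or.inr h'.symm
      · rintro (h | h)
        · exact not_lt_of_gt h
        · exact h ▸ lt_irrefl _
    have hdisj : Disjoint (Finset.univ.filter (fun p : ι × ι => p.2 < p.1))
        (Finset.univ.filter (fun p : ι × ι => p.1 = p.2)) := by
      rw [Finset.disjoint_filter]
      intro p _ h h'
      exact absurd h (h' ▸ lt_irrefl _)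
    rw [hsplit, Finset.sum_union hdisj]
    have hdiag : ∑ p ∈ Finset.univ.filter (fun p : ι × ι => p.1 = p.2), f p = 0 := by
      refine Finset.sum_eq_zero fun p hp => ?_
      simp only [Finset.mem_filter] at hp
      rw [hf]
      simp only
      rw [hp.2, h0, mul_zero]
    rw [hdiag, add_zero]
    have hgt : ∑ p ∈ Finset.univ.filter (fun p : ι × ι => p.2 < p.1), f p
        = ∑ p ∈ S, c z p.1 * c y p.2 * D (b p.1) (b p.2) := by
      refine Finset.sum_nbij' (fun p => Prod.swap p) (fun p => Prod.swap p) ?_ ?_ ?_ ?_ ?_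
      · intro p hp
        simp only [Finset.mem_filter, Finset.mem_univ, true_and] at hp ⊢
        simpa [hS] using hp
      · intro p hp
        simp only [hS, Finset.mem_filter, Finset.mem_univ, true_and] at hp ⊢
        exact hp
      · intro p _; simp
      · intro p _; simp
      · intro p _
        rw [hf]
        simp only [Prod.fst_swap, Prod.snd_swap]
        rw [Dsymm]
        ring
    rw [hgt, ← Finset.sum_add_distrib]
    refine Finset.sum_congr rfl fun p _ => ?_
    rw [hf]
    ring

theorem bisectors_isomorphic
    {Y : Type*} [AddCommGroup Y] [Module.Free ℤ Y] [Module.Finite ℤ Y]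
    (Q : Y → ℤ)
    (hQsmul : ∀ (n : ℤ) (y : Y), Q (n • y) = n ^ 2 * Q y)
    (hBadd : ∀ y₁ y₂ y₃ : Y,
      (Q (y₁ + y₂ + y₃) - Q (y₁ + y₂) - Q y₃)
        = (Q (y₁ + y₃) - Q y₁ - Q y₃) + (Q (y₂ + y₃) - Q y₂ - Q y₃))
    (C₁ C₂ : Y → Y → ZMod 2)
    (hC₁add₁ : ∀ y₁ y₂ y₃ : Y, C₁ (y₁ + y₂) y₃ = C₁ y₁ y₃ + C₁ y₂ y₃)
    (hC₁add₂ : ∀ y₁ y₂ y₃ : Y, C₁ y₁ (y₂ + y₃) = C₁ y₁ y₂ + C₁ y₁ y₃)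
    (hC₂add₁ : ∀ y₁ y₂ y₃ : Y, C₂ (y₁ + y₂) y₃ = C₂ y₁ y₃ + C₂ y₂ y₃)
    (hC₂add₂ : ∀ y₁ y₂ y₃ : Y, C₂ y₁ (y₂ + y₃) = C₂ y₁ y₂ + C₂ y₁ y₃)
    (hC₁Q : ∀ y : Y, C₁ y y = (Q y : ZMod 2))
    (hC₂Q : ∀ y : Y, C₂ y y = (Q y : ZMod 2)) :
    ∃ H : Y → ZMod 2,
      (∀ y z : Y, H (y + 2 • z) = H y) ∧
      (∀ y₁ y₂ : Y, C₂ y₁ y₂ - C₁ y₁ y₂ = H (y₁ + y₂) - H y₁ - H y₂) := by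
  obtain ⟨H, hH1, hH2⟩ := bisector_aux (Module.finBasis ℤ Y) (fun y z => C₂ y z - C₁ y z)
    (by intro y₁ y₂ y₃; rw [hC₂add₁, hC₁add₁]; ring)
    (by intro y₁ y₂ y₃; rw [hC₂add₂, hC₁add₂]; ring)
    (by intro y; rw [hC₂Q, hC₁Q, sub_self])
  exact ⟨H, hH1, hH2⟩
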